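/- Let P(u₋₁,u,u₁,u₂) be a polynomial over a field of characteristic 0 that is affine-linear in each of its four arguments. Then P satisfies the symmetry relations P(u₋₁,u,u₁,u₂) = P(u₂,u₁,u,u₋₁) = P(u₁,u,u₋₁,u₂) if and only if there exist constants a₀,a₁,a₂,a₃,a₄,b₂ such that P = a₄·u₋₁uu₁u₂ + a₃·(u₋₁uu₁+u₋₁uu₂+u₋₁u₁u₂+uu₁u₂) + a₂·(u₋₁+u₁)(u+u₂) + b₂·(u₋₁u₁+uu₂) + a₁·(u₋₁+u+u₁+u₂) + a₀. -/

import Mathlib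

open MvPolynomial

noncomputable def ev (a b c d : ℕ) : Fin 4 →₀ ℕ := Finsupp.equivFunOnFinite.symm ![a,b,c,d]

lemma ev_apply (a b c d : ℕ) (i : Fin 4) : ev a b c d i = ![a,b,c,d] i := rfl

lemma ev_def (a b c d : ℕ) :
    ev a b c d = Finsupp.single 0 a + Finsupp.single 1 b + Finsupp.single 2 c + Finsupp.single 3 d := by
  ext i; fin_cases i <;> simp [ev_apply, Finsupp.single_apply]

lemma ev_add (a b c d a' b' c' d' : ℕ) :
    ev a b c d + ev a' b' c' d' = ev (a+a') (b+b') (c+c') (d+d') := by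
  ext i; fin_cases i <;> simp [ev_apply]

lemma ev_inj {a b c d a' b' c' d' : ℕ} :
    ev a b c d = ev a' b' c' d' ↔ a = a' ∧ b = b' ∧ c = c' ∧ d = d' := by
  constructor
  · intro h
    have h2 := Finsupp.equivFunOnFinite.symm.injective h
    exact ⟨congrFun h2 0, congrFun h2 1, congrFun h2 2, congrFun h2 3⟩
  · rintro ⟨rfl, rfl, rfl, rfl⟩; rfl

lemma mapDomain_r (a b c d : ℕ) :
    Finsupp.mapDomain (![3,2,1,0] : Fin 4 → Fin 4) (ev a b c d) = ev d c b a := by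
  rw [ev_def, ev_def]
  simp [Finsupp.mapDomain_add, Finsupp.mapDomain_single]
  abel

lemma mapDomain_s (a b c d : ℕ) :
    Finsupp.mapDomain (![2,1,0,3] : Fin 4 → Fin 4) (ev a b c d) = ev c b a d := by
  rw [ev_def, ev_def]
  simp [Finsupp.mapDomain_add, Finsupp.mapDomain_single]
  abel

lemma ev_zero : (0 : Fin 4 →₀ ℕ) = ev 0 0 0 0 := by
  ext i; fin_cases i <;> simp [ev_apply]

lemma C_ev {K : Type*} [CommSemiring K] (a : K) :
    (C a : MvPolynomial (Fin 4) K) = monomial (ev 0 0 0 0) a := by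
  rw [C_apply, ev_zero]

lemma X_ev0 {K : Type*} [CommSemiring K] : (X 0 : MvPolynomial (Fin 4) K) = monomial (ev 1 0 0 0) 1 := by
  rw [X, ev_def]; simp
lemma X_ev1 {K : Type*} [CommSemiring K] : (X 1 : MvPolynomial (Fin 4) K) = monomial (ev 0 1 0 0) 1 := by
  rw [X, ev_def]; simp
lemma X_ev2 {K : Type*} [CommSemiring K] : (X 2 : MvPolynomial (Fin 4) K) = monomial (ev 0 0 1 0) 1 := by
  rw [X, ev_def]; simp
lemma X_ev3 {K : Type*} [CommSemiring K] : (X 3 : MvPolynomial (Fin 4) K) = monomial (ev 0 0 0 1) 1 := by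
  rw [X, ev_def]; simp

set_option maxHeartbeats 1000000 in
/-- An affine-linear polynomial in four variables (vertices u₋₁ = X 0, u = X 1,
u₁ = X 2, u₂ = X 3 of a square) has the symmetry group of the square iff it is of
the canonical form with six coefficients. -/
theorem stmt6 {K : Type*} [Field K] [CharZero K]
    (P : MvPolynomial (Fin 4) K) (hlin : ∀ i, P.degreeOf i ≤ 1) :
    (rename (![3, 2, 1, 0] : Fin 4 → Fin 4) P = P ∧
      rename (![2, 1, 0, 3] : Fin 4 → Fin 4) P = P) ↔
    ∃ a0 a1 a2 a3 a4 b2 : K,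
      P = C a4 * (X 0 * X 1 * X 2 * X 3)
        + C a3 * (X 0 * X 1 * X 2 + X 0 * X 1 * X 3 + X 0 * X 2 * X 3
            + X 1 * X 2 * X 3)
        + C a2 * ((X 0 + X 2) * (X 1 + X 3))
        + C b2 * (X 0 * X 2 + X 1 * X 3)
        + C a1 * (X 0 + X 1 + X 2 + X 3)
        + C a0 := by
  constructor
  · rintro ⟨h1, h2⟩
    have hr : ∀ a b c d : ℕ, P.coeff (ev d c b a) = P.coeff (ev a b c d) := by
      intro a b c d
      rw [← mapDomain_r]
      conv_lhs => rw [← h1]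
      exact coeff_rename_mapDomain _ (by decide) P _
    have hs : ∀ a b c d : ℕ, P.coeff (ev c b a d) = P.coeff (ev a b c d) := by
      intro a b c d
      rw [← mapDomain_s]
      conv_lhs => rw [← h2]
      exact coeff_rename_mapDomain _ (by decide) P _
    have q0010 : P.coeff (ev 0 0 1 0) = P.coeff (ev 1 0 0 0) := hs 1 0 0 0
    have q0100 : P.coeff (ev 0 1 0 0) = P.coeff (ev 1 0 0 0) := (hr 0 0 1 0).trans q0010
    have q0001 : P.coeff (ev 0 0 0 1) = P.coeff (ev 1 0 0 0) := hr 1 0 0 0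
    have q0011 : P.coeff (ev 0 0 1 1) = P.coeff (ev 1 1 0 0) := (hr 0 0 1 1).symm
    have q0110 : P.coeff (ev 0 1 1 0) = P.coeff (ev 1 1 0 0) := (hs 0 1 1 0).symm
    have q1001 : P.coeff (ev 1 0 0 1) = P.coeff (ev 1 1 0 0) := (hs 1 0 0 1).symm.trans q0011
    have q0101 : P.coeff (ev 0 1 0 1) = P.coeff (ev 1 0 1 0) := (hr 0 1 0 1).symm
    have q0111 : P.coeff (ev 0 1 1 1) = P.coeff (ev 1 1 1 0) := hr 1 1 1 0
    have q1101 : P.coeff (ev 1 1 0 1) = P.coeff (ev 1 1 1 0) := (hs 1 1 0 1).symm.trans q0111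
    have q1011 : P.coeff (ev 1 0 1 1) = P.coeff (ev 1 1 1 0) := (hr 1 0 1 1).symm.trans q1101
    have hsup : ∀ n0 n1 n2 n3 : ℕ, P.coeff (ev n0 n1 n2 n3) ≠ 0 →
        n0 ≤ 1 ∧ n1 ≤ 1 ∧ n2 ≤ 1 ∧ n3 ≤ 1 := by
      intro n0 n1 n2 n3 hc
      have hmem := MvPolynomial.mem_support_iff.mpr hc
      refine ⟨?_, ?_, ?_, ?_⟩
      · simpa [ev_apply] using degreeOf_le_iff.mp (hlin 0) _ hmem
      · simpa [ev_apply] using degreeOf_le_iff.mp (hlin 1) _ hmem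
      · simpa [ev_apply] using degreeOf_le_iff.mp (hlin 2) _ hmem
      · simpa [ev_apply] using degreeOf_le_iff.mp (hlin 3) _ hmem
    refine ⟨P.coeff (ev 0 0 0 0), P.coeff (ev 1 0 0 0), P.coeff (ev 1 1 0 0),
      P.coeff (ev 1 1 1 0), P.coeff (ev 1 1 1 1), P.coeff (ev 1 0 1 0), ?_⟩
    apply MvPolynomial.ext
    intro d
    obtain ⟨n0, n1, n2, n3, rfl⟩ : ∃ n0 n1 n2 n3, d = ev n0 n1 n2 n3 :=
      ⟨d 0, d 1, d 2, d 3, by ext i; fin_cases i <;> simp [ev_apply]⟩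
    by_cases hgood : n0 ≤ 1 ∧ n1 ≤ 1 ∧ n2 ≤ 1 ∧ n3 ≤ 1
    · obtain ⟨g0, g1, g2, g3⟩ := hgood
      interval_cases n0 <;> interval_cases n1 <;> interval_cases n2 <;> interval_cases n3 <;>
        simp [C_ev, X_ev0, X_ev1, X_ev2, X_ev3, monomial_mul, mul_add, add_mul,
          ev_add, coeff_add, coeff_monomial, ev_inj, q0010, q0100, q0001, q0011, q0110,
          q1001, q0101, q0111, q1101, q1011]
    · have hz : P.coeff (ev n0 n1 n2 n3) = 0 := by
        by_contra hc; exact hgood (hsup _ _ _ _ hc)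
      rw [hz]
      simp only [C_ev, X_ev0, X_ev1, X_ev2, X_ev3, monomial_mul, mul_add, add_mul,
        mul_one, one_mul, ev_add, coeff_add, coeff_monomial, ev_inj]
      have hF : ∀ p0 p1 p2 p3 : ℕ, p0 ≤ 1 → p1 ≤ 1 → p2 ≤ 1 → p3 ≤ 1 →
          ((p0 = n0 ∧ p1 = n1 ∧ p2 = n2 ∧ p3 = n3) ↔ False) := by
        intro p0 p1 p2 p3 h0 h1 h2 h3
        constructor
        · rintro ⟨rfl, rfl, rfl, rfl⟩; exact hgood ⟨h0, h1, h2, h3⟩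
        · exact False.elim
      simp [hF]
  · rintro ⟨a0, a1, a2, a3, a4, b2, rfl⟩
    constructor <;>
    · simp only [map_add, map_mul, rename_C, rename_X, Matrix.cons_val_zero,
        Matrix.cons_val_one, Matrix.head_cons, Matrix.cons_val]
      norm_num
      ring
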